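/- Let X = {[b₁:c₁],...,[b_s:c_s]} ⊂ ℙ¹ be distinct points with all bᵢ ≠ 0 and let a₁ ≤ ... ≤ a_s be non-negative integers. The Hilbert function of the power ideal J = ⟨(b₁x+c₁y)^{a₁+1},...,(b_sx+c_sy)^{a_s+1}⟩ ⊆ ℝ[x,y] in degree d is dim J_d = min{d+1, Σᵢ max(d - aᵢ, 0)}. -/

import Mathlib

open Finset

lemma shift_sum (m : ℕ) (F : ℕ → ℝ) :
    ∑ r ∈ range (m+2), (-1:ℝ)^r * (m+1).choose r * F r =
    ∑ r ∈ range (m+1), (-1:ℝ)^r * m.choose r * (F r - F (r+1)) := by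
  have S1 : ∑ r ∈ range (m+1), ((-1:ℝ)^(r+1) * (m.choose (r+1):ℝ) * F (r+1))
      = (∑ r ∈ range (m+1), (-1:ℝ)^r * (m.choose r:ℝ) * F r) - F 0 := by
    have e1 := Finset.sum_range_succ' (fun r => (-1:ℝ)^r * (m.choose r:ℝ) * F r) (m+1)
    have e2 := Finset.sum_range_succ (fun r => (-1:ℝ)^r * (m.choose r:ℝ) * F r) (m+1)
    simp only [Nat.choose_succ_self, Nat.cast_zero, mul_zero, zero_mul, add_zero,
      Nat.choose_zero_right, Nat.cast_one, mul_one, pow_zero, one_mul] at e1 e2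
    rw [e2] at e1
    linarith
  rw [Finset.sum_range_succ']
  have h1 : ∀ r ∈ range (m+1), (-1:ℝ)^(r+1) * ((m+1).choose (r+1) : ℝ) * F (r+1)
      = ((-1:ℝ)^(r+1) * (m.choose (r+1):ℝ) * F (r+1)) - ((-1:ℝ)^r * (m.choose r:ℝ) * F (r+1)) := by
    intro r _
    rw [Nat.choose_succ_succ]
    push_cast
    ring
  rw [Finset.sum_congr rfl h1, Finset.sum_sub_distrib, S1]
  have h2 : ∑ r ∈ range (m+1), (-1:ℝ)^r * (m.choose r:ℝ) * (F r - F (r+1))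
      = (∑ r ∈ range (m+1), (-1:ℝ)^r * (m.choose r:ℝ) * F r)
        - ∑ r ∈ range (m+1), (-1:ℝ)^r * (m.choose r:ℝ) * F (r+1) := by
    rw [← Finset.sum_sub_distrib]
    exact Finset.sum_congr rfl (fun r _ => by ring)
  rw [h2]
  simp only [pow_zero, Nat.choose_zero_right, Nat.cast_one, mul_one, one_mul]
  ring


lemma alt_sum_choose (m : ℕ) : ∀ j k : ℕ,
    ∑ r ∈ range (m+1), (-1:ℝ)^r * m.choose r * (j+r).choose k =
    (if m ≤ k then (-1:ℝ)^m * (j.choose (k-m)) else 0) := by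
  induction m with
  | zero => intro j k; simp
  | succ m ih =>
    intro j k
    rw [shift_sum m (fun r => ((j+r).choose k : ℝ))]
    match k with
    | 0 => simp
    | (k'+1) =>
      have h1 : ∀ r ∈ range (m+1), (-1:ℝ)^r * m.choose r * (((j+r).choose (k'+1) : ℝ) - ((j+(r+1)).choose (k'+1) : ℝ)) = -((-1:ℝ)^r * m.choose r * ((j+r).choose k' : ℝ)) := by
        intro r _
        have h : j + (r+1) = (j + r) + 1 := by omega
        rw [h, Nat.choose_succ_succ ((j+r)) k']
        push_cast
        ring
      rw [Finset.sum_congr rfl h1, Finset.sum_neg_distrib, ih j k']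
      by_cases h : m ≤ k'
      · rw [if_pos h, if_pos (by omega)]
        have : k' - m = k' + 1 - (m+1) := by omega
        rw [this]
        push_cast
        ring
      · rw [if_neg h, if_neg (by omega), neg_zero]


section BASE
open Finset Polynomial

lemma fact_id (d j r q : ℕ) (h1 : j + r ≤ d) (h2 : q ≤ d) :
    (j+r).factorial * ((d-j-r).factorial * (q.choose (d-j-r))) =
    q.factorial * ((d-q).factorial * ((j+r).choose (d-q))) := by
  rcases le_or_gt (d - j - r) q with hle | hlt
  · apply Nat.eq_of_mul_eq_mul_right (Nat.factorial_pos (q - (d - j - r)))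
    have A := Nat.choose_mul_factorial_mul_factorial hle
    have hdq : d - q ≤ j + r := by omega
    have B := Nat.choose_mul_factorial_mul_factorial hdq
    have heq : q - (d - j - r) = (j + r) - (d - q) := by omega
    calc (j+r).factorial * ((d-j-r).factorial * q.choose (d-j-r)) * (q-(d-j-r)).factorial
        = (j+r).factorial * (q.choose (d-j-r) * (d-j-r).factorial * (q-(d-j-r)).factorial) := by
          ring
      _ = (j+r).factorial * q.factorial := by rw [A]
      _ = q.factorial * ((j+r).choose (d-q) * (d-q).factorial * ((j+r)-(d-q)).factorial) := by
          rw [B]; ring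
      _ = q.factorial * ((d-q).factorial * (j+r).choose (d-q)) * (q-(d-j-r)).factorial := by
          rw [← heq]; ring
  · have hc : q.choose (d-j-r) = 0 := Nat.choose_eq_zero_of_lt hlt
    have hc2 : (j+r).choose (d-q) = 0 := Nat.choose_eq_zero_of_lt (by omega)
    simp [hc, hc2]

/-- the linear condition functional -/
noncomputable def condF (d m : ℕ) (t : ℝ) (j : ℕ) (h : Polynomial ℝ) : ℝ :=
  ∑ r ∈ range (m+1), (m.choose r : ℝ) * t^(m-r) * (j+r).factorial * (d-j-r).factorial
    * h.coeff (d-j-r)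

lemma coeff_X_sub_C_pow (t : ℝ) (q n : ℕ) :
    ((X - C t)^q).coeff n = (-t)^(q-n) * q.choose n := by
  have : X - C t = X + C (-t) := by ring_nf; rw [map_neg]; ring
  rw [this, coeff_X_add_C_pow]

lemma condF_pow_eq (d m j q : ℕ) (t : ℝ) (hjm : j + m ≤ d) (hq : q ≤ d) (hd : d ≤ m + j + q) :
    condF d m t j ((X - C t)^q) =
    ((q.factorial : ℝ) * (d-q).factorial * (-1)^(m+j+q-d+m) * t^(m+j+q-d)) *
      (if m ≤ d - q then (-1:ℝ)^m * (j.choose (d-q-m)) else 0) := by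
  have per : ∀ r ∈ range (m+1),
      (m.choose r : ℝ) * t^(m-r) * (j+r).factorial * (d-j-r).factorial *
        ((-t)^(q-(d-j-r)) * q.choose (d-j-r)) =
      ((q.factorial : ℝ) * (d-q).factorial * (-1)^(m+j+q-d+m) * t^(m+j+q-d)) *
        ((-1:ℝ)^r * m.choose r * (j+r).choose (d-q)) := by
    intro r hr
    rw [mem_range] at hr
    have hrm : r ≤ m := by omega
    rcases le_or_gt (d-j-r) q with hle | hlt
    · have F := fact_id d j r q (by omega) hq
      have F' : ((j+r).factorial : ℝ) * (((d-j-r).factorial : ℝ) * (q.choose (d-j-r) : ℝ))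
          = (q.factorial : ℝ) * (((d-q).factorial : ℝ) * ((j+r).choose (d-q) : ℝ)) := by
        exact_mod_cast congrArg (Nat.cast : ℕ → ℝ) F
      have hsgn : (-t)^(q-(d-j-r)) = (-1:ℝ)^(q-(d-j-r)) * t^(q-(d-j-r)) := by rw [neg_pow]
      have hexp : (m-r) + (q-(d-j-r)) = m+j+q-d := by omega
      have hsg : (-1:ℝ)^(m+j+q-d+m) * (-1:ℝ)^r = (-1:ℝ)^(q-(d-j-r)) := by
        have hh : m+j+q-d+m + r = (q-(d-j-r)) + 2*m := by omega
        calc (-1:ℝ)^(m+j+q-d+m) * (-1:ℝ)^r = (-1:ℝ)^(m+j+q-d+m+r) := by rw [← pow_add]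
          _ = (-1:ℝ)^((q-(d-j-r)) + 2*m) := by rw [hh]
          _ = (-1:ℝ)^(q-(d-j-r)) := by rw [pow_add, pow_mul, neg_one_sq, one_pow, mul_one]
      calc (m.choose r : ℝ) * t^(m-r) * (j+r).factorial * (d-j-r).factorial *
            ((-t)^(q-(d-j-r)) * q.choose (d-j-r))
          = (m.choose r : ℝ) * (((j+r).factorial : ℝ) * (((d-j-r).factorial : ℝ) *
              (q.choose (d-j-r) : ℝ))) * ((-1:ℝ)^(q-(d-j-r)) * (t^(m-r) * t^(q-(d-j-r)))) := by
            rw [hsgn]; ring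
        _ = (m.choose r : ℝ) * ((q.factorial : ℝ) * (((d-q).factorial : ℝ) *
              ((j+r).choose (d-q) : ℝ))) * (((-1:ℝ)^(m+j+q-d+m) * (-1:ℝ)^r) * t^((m-r)+(q-(d-j-r)))) := by
            rw [F', hsg, ← pow_add]
        _ = ((q.factorial : ℝ) * (d-q).factorial * (-1)^(m+j+q-d+m) * t^(m+j+q-d)) *
              ((-1:ℝ)^r * m.choose r * (j+r).choose (d-q)) := by rw [hexp]; ring
    · have h1 : q.choose (d-j-r) = 0 := Nat.choose_eq_zero_of_lt hlt
      have h2 : (j+r).choose (d-q) = 0 := Nat.choose_eq_zero_of_lt (by omega)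
      simp [h1, h2]
  unfold condF
  simp_rw [coeff_X_sub_C_pow]
  rw [Finset.sum_congr rfl per, ← Finset.mul_sum, alt_sum_choose]

end BASE
section KEY
open Finset Polynomial

lemma condF_high (d m j q : ℕ) (t : ℝ) (hjm : j + m ≤ d) (hq : q ≤ d) (hgt : d - m + 1 ≤ q) :
    condF d m t j ((X - C t)^q) = 0 := by
  rw [condF_pow_eq d m j q t hjm hq (by omega), if_neg (by omega), mul_zero]

lemma condF_low (d m j q : ℕ) (t : ℝ) (hlow : m + j + q < d) :
    condF d m t j ((X - C t)^q) = 0 := by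
  apply Finset.sum_eq_zero
  intro r hr
  rw [mem_range] at hr
  have hz : q.choose (d - j - r) = 0 := Nat.choose_eq_zero_of_lt (by omega)
  rw [coeff_X_sub_C_pow, hz]
  simp

lemma condF_diag (d m j : ℕ) (t : ℝ) (hjm : j + m ≤ d) :
    condF d m t j ((X - C t)^(d-m-j)) = ((d-m-j).factorial : ℝ) * (m+j).factorial := by
  rw [condF_pow_eq d m j (d-m-j) t hjm (by omega) (by omega)]
  rw [show m+j+(d-m-j)-d = 0 from by omega, show d-(d-m-j) = m+j from by omega,
    show m+j-m = j from by omega]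
  rw [if_pos (by omega), Nat.choose_self]
  simp only [pow_zero, Nat.cast_one, mul_one]
  rw [mul_assoc, ← pow_add, show 0+m+m = 2*m from by omega, pow_mul, neg_one_sq, one_pow, mul_one]

lemma condF_sum {d m : ℕ} {t : ℝ} {j : ℕ} {ι : Type*} (s : Finset ι) (f : ι → Polynomial ℝ) :
    condF d m t j (∑ k ∈ s, f k) = ∑ k ∈ s, condF d m t j (f k) := by
  unfold condF
  simp_rw [finset_sum_coeff, Finset.mul_sum]
  rw [Finset.sum_comm]

lemma condF_C_mul {d m : ℕ} {t : ℝ} {j : ℕ} (aa : ℝ) (p : Polynomial ℝ) :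
    condF d m t j (C aa * p) = aa * condF d m t j p := by
  unfold condF
  rw [Finset.mul_sum]
  refine Finset.sum_congr rfl fun r _ => ?_
  rw [coeff_C_mul]
  ring

lemma taylor_expand (d : ℕ) (t : ℝ) (h : Polynomial ℝ) (hdeg : h.natDegree ≤ d) :
    ∑ q ∈ range (d+1), C ((taylor t h).coeff q) * (X - C t)^q = h := by
  conv_rhs => rw [← sum_taylor_eq h t]
  rw [Polynomial.sum_over_range' _ (by simp) (d+1) (by rw [natDegree_taylor]; omega)]

lemma condF_expand (d m j : ℕ) (t : ℝ) (h : Polynomial ℝ) (hdeg : h.natDegree ≤ d) :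
    condF d m t j h =
      ∑ q ∈ range (d+1), (taylor t h).coeff q * condF d m t j ((X - C t)^q) := by
  conv_lhs => rw [← taylor_expand d t h hdeg]
  rw [condF_sum]
  exact Finset.sum_congr rfl fun q _ => condF_C_mul _ _

lemma taylor_pow_X_sub_C (t : ℝ) (e : ℕ) : taylor t ((X - C t)^e) = X^e := by
  induction e with
  | zero => simp [taylor_one]
  | succ e ih =>
    rw [pow_succ, taylor_mul, ih, map_sub, taylor_X, taylor_C, pow_succ]
    ring

lemma key_dvd (d m : ℕ) (t : ℝ) (hm : 1 ≤ m) (hmd : m ≤ d) (h : Polynomial ℝ)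
    (hdeg : h.natDegree ≤ d)
    (hc : ∀ j, j + m ≤ d → condF d m t j h = 0) : (X - C t)^(d - m + 1) ∣ h := by
  have main : ∀ j, ∀ j' ≤ j, j' + m ≤ d → (taylor t h).coeff (d-m-j') = 0 := by
    intro j
    induction j with
    | zero =>
      intro j' hj' hj'm
      interval_cases j'
      have hcond := hc 0 (by omega)
      rw [condF_expand d m 0 t h hdeg] at hcond
      rw [Finset.sum_eq_single_of_mem (d-m) (by rw [mem_range]; omega)] at hcond
      · rcases mul_eq_zero.1 hcond with h0 | h0
        · simpa using h0
        · exfalso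
          rw [show d - m = d - m - 0 from rfl, condF_diag d m 0 t (by omega)] at h0
          have := Nat.factorial_pos (d-m-0)
          have := Nat.factorial_pos (m+0)
          rw [mul_eq_zero] at h0
          rcases h0 with h0 | h0 <;> [skip; skip] <;>
            exact absurd h0 (by positivity)
      · intro q hq hne
        rcases lt_or_ge q (d-m) with hlt | hge
        · rw [condF_low d m 0 q t (by omega), mul_zero]
        · rw [condF_high d m 0 q t (by omega) (by rw [mem_range] at hq; omega) (by omega),
            mul_zero]
    | succ j ih =>
      intro j' hj' hj'm
      rcases le_or_gt j' j with hle | hgt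
      · exact ih j' hle hj'm
      have hj'eq : j' = j + 1 := by omega
      subst hj'eq
      have hcond := hc (j+1) hj'm
      rw [condF_expand d m (j+1) t h hdeg] at hcond
      rw [Finset.sum_eq_single_of_mem (d-m-(j+1)) (by rw [mem_range]; omega)] at hcond
      · rcases mul_eq_zero.1 hcond with h0 | h0
        · exact h0
        · exfalso
          rw [condF_diag d m (j+1) t (by omega)] at h0
          rw [mul_eq_zero] at h0
          rcases h0 with h0 | h0 <;>
            exact absurd h0 (by positivity)
      · intro q hq hne
        rw [mem_range] at hq
        rcases lt_or_ge q (d-m-(j+1)) with hlt | hge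
        · rw [condF_low d m (j+1) q t (by omega), mul_zero]
        rcases le_or_gt (d-m+1) q with hhigh | hmid
        · rw [condF_high d m (j+1) q t (by omega) (by omega) hhigh, mul_zero]
        · -- d-m-(j+1) < q ≤ d-m : use induction hypothesis
          have hq2 : q = d - m - (d - m - q) := by omega
          rw [hq2, ih (d-m-q) (by omega) (by omega), zero_mul]
  -- now conclude divisibility
  conv_rhs => rw [← taylor_expand d t h hdeg]
  apply Finset.dvd_sum
  intro q hq
  rcases le_or_gt (d-m+1) q with hge | hlt
  · exact Dvd.dvd.mul_left (pow_dvd_pow _ hge) _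
  · have h0 : ((taylor t) h).coeff q = 0 := by
      have h1 := main (d-m-q) (d-m-q) le_rfl (by omega)
      rwa [show d-m-(d-m-q) = q from by omega] at h1
    rw [h0]
    simp only [map_zero, zero_mul]
    exact dvd_zero _
    
lemma key_zero (d m : ℕ) (t : ℝ) (hmd : m ≤ d) (h : Polynomial ℝ)
    (hdeg : h.natDegree ≤ d) (hdvd : (X - C t)^(d - m + 1) ∣ h) :
    ∀ j, j + m ≤ d → condF d m t j h = 0 := by
  intro j hj
  rw [condF_expand d m j t h hdeg]
  apply Finset.sum_eq_zero
  intro q hq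
  rw [mem_range] at hq
  rcases le_or_gt (d-m+1) q with hge | hlt
  · rw [condF_high d m j q t (by omega) (by omega) hge, mul_zero]
  · obtain ⟨u, rfl⟩ := hdvd
    rw [taylor_mul, taylor_pow_X_sub_C, coeff_X_pow_mul']
    · rw [if_neg (by omega), zero_mul]

end KEY
section EUCL
open Finset Polynomial

noncomputable def vvec (d m j : ℕ) (t : ℝ) : EuclideanSpace ℝ (Fin (d+1)) :=
  WithLp.toLp 2 fun p => if j ≤ (p:ℕ) then (m.choose ((p:ℕ)-j) : ℝ) * t^(m-((p:ℕ)-j)) else 0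

noncomputable def thetaL (d : ℕ) : Polynomial ℝ →ₗ[ℝ] EuclideanSpace ℝ (Fin (d+1)) where
  toFun h := WithLp.toLp 2 fun p => (((p:ℕ).factorial : ℝ) * ((d-(p:ℕ)).factorial : ℝ)) * h.coeff (d-(p:ℕ))
  map_add' x y := by
    ext p
    simp only [Polynomial.coeff_add, PiLp.add_apply, PiLp.toLp_apply]
    ring
  map_smul' r x := by
    ext p
    simp only [Polynomial.coeff_smul, PiLp.smul_apply, PiLp.toLp_apply, smul_eq_mul, RingHom.id_apply]
    ring

lemma thetaL_apply (d : ℕ) (h : Polynomial ℝ) (p : Fin (d+1)) :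
    thetaL d h p = (((p:ℕ).factorial : ℝ) * ((d-(p:ℕ)).factorial : ℝ)) * h.coeff (d-(p:ℕ)) := rfl

lemma inner_vvec (d m j : ℕ) (hjm : j + m ≤ d) (t : ℝ) (h : Polynomial ℝ) :
    (inner ℝ (vvec d m j t) (thetaL d h) : ℝ) = condF d m t j h := by
  rw [PiLp.inner_apply]
  simp only [RCLike.inner_apply', starRingEnd_apply, star_trivial]
  set F : ℕ → ℝ := fun p =>
    (if j ≤ p then (m.choose (p-j) : ℝ) * t^(m-(p-j)) else 0) *
      ((((p:ℕ).factorial : ℝ) * ((d-p).factorial : ℝ)) * h.coeff (d-p)) with hF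
  have hsum : ∑ p : Fin (d+1), (vvec d m j t p) * (thetaL d h p) = ∑ n ∈ range (d+1), F n := by
    rw [← Fin.sum_univ_eq_sum_range]
    exact Finset.sum_congr rfl fun p _ => by simp only [hF, vvec, thetaL_apply]
  rw [hsum]
  have himg : (range (m+1)).image (fun r => j + r) ⊆ range (d+1) := by
    intro x hx
    simp only [mem_image, mem_range] at hx ⊢
    obtain ⟨r, hr, rfl⟩ := hx
    omega
  have hzero : ∀ p ∈ range (d+1), p ∉ (range (m+1)).image (fun r => j + r) → F p = 0 := by
    intro p hp hnp
    simp only [mem_image, mem_range, not_exists, not_and] at hnp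
    rcases le_or_gt j p with hjp | hjp
    · have : m < p - j := by
        by_contra hc
        exact hnp (p - j) (by omega) (by omega)
      rw [hF]
      simp only [if_pos hjp, Nat.choose_eq_zero_of_lt this]
      simp
    · rw [hF]
      simp only [if_neg (by omega : ¬ j ≤ p)]
      simp
  rw [← Finset.sum_subset himg hzero, Finset.sum_image (by intro x _ y _ h; simp only at h; omega)]
  unfold condF
  refine Finset.sum_congr rfl fun r hr => ?_
  rw [hF]
  simp only [if_pos (by omega : j ≤ j + r), show j + r - j = r from by omega,
    show d - (j+r) = d - j - r from by omega]
  ring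

lemma mem_orthogonal_span_iff {E : Type*} [NormedAddCommGroup E] [InnerProductSpace ℝ E]
    (S : Set E) (v : E) :
    v ∈ (Submodule.span ℝ S)ᗮ ↔ ∀ u ∈ S, (inner ℝ u v : ℝ) = 0 := by
  rw [Submodule.mem_orthogonal]
  constructor
  · intro H u hu
    exact H u (Submodule.subset_span hu)
  · intro H u hu
    induction hu using Submodule.span_induction with
    | mem x hx => exact H x hx
    | zero => exact inner_zero_left v
    | add x y _ _ hx hy => rw [inner_add_left, hx, hy, add_zero]
    | smul a x _ hx => rw [inner_smul_left, hx, mul_zero]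

variable (d s : ℕ) (tt : Fin s → ℝ) (aa : Fin s → ℕ)

def genSet : Set (EuclideanSpace ℝ (Fin (d+1))) :=
  {w | ∃ (i : Fin s) (j : ℕ), j + (aa i + 1) ≤ d ∧ w = vvec d (aa i + 1) j (tt i)}

noncomputable def PP : Polynomial ℝ := ∏ i, (X - C (tt i))^(d - aa i)

noncomputable def DD : ℕ := ∑ i, (d - aa i)

noncomputable def Dsub : Submodule ℝ (EuclideanSpace ℝ (Fin (d+1))) :=
  Submodule.map ((thetaL d).comp (LinearMap.mulLeft ℝ (PP d s tt aa)))
    (Polynomial.degreeLT ℝ (d+1 - DD d s aa))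

noncomputable def invtheta (d : ℕ) (g : EuclideanSpace ℝ (Fin (d+1))) : Polynomial ℝ :=
  ∑ n ∈ range (d+1), C (g ⟨d - n, by omega⟩ / (((d-n).factorial : ℝ) * (n.factorial : ℝ))) * X^n

lemma natDegree_invtheta (d : ℕ) (g : EuclideanSpace ℝ (Fin (d+1))) :
    (invtheta d g).natDegree ≤ d := by
  apply Polynomial.natDegree_sum_le_of_forall_le
  intro n hn
  rw [mem_range] at hn
  exact le_trans (Polynomial.natDegree_C_mul_le _ _)
    (le_trans (Polynomial.natDegree_X_pow_le n) (by omega))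

lemma coeff_invtheta (d : ℕ) (g : EuclideanSpace ℝ (Fin (d+1))) (n : ℕ) (hn : n ≤ d) :
    (invtheta d g).coeff n = g ⟨d - n, by omega⟩ / (((d-n).factorial : ℝ) * (n.factorial : ℝ)) := by
  unfold invtheta
  rw [finset_sum_coeff]
  rw [Finset.sum_eq_single_of_mem n (by rw [mem_range]; omega)]
  · rw [coeff_C_mul, coeff_X_pow, if_pos rfl, mul_one]
  · intro k _ hk
    rw [coeff_C_mul, coeff_X_pow, if_neg (Ne.symm hk), mul_zero]

lemma theta_invtheta (d : ℕ) (g : EuclideanSpace ℝ (Fin (d+1))) :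
    thetaL d (invtheta d g) = g := by
  ext p
  rw [thetaL_apply, coeff_invtheta d g (d - (p:ℕ)) (by omega)]
  have h1 : d - (d - (p:ℕ)) = (p:ℕ) := by omega
  have h2 : (⟨d - (d - (p:ℕ)), by omega⟩ : Fin (d+1)) = p := by
    apply Fin.ext; simp [h1]
  rw [h2]
  have hfac : (((p:ℕ).factorial:ℝ) * ((d-(p:ℕ)).factorial:ℝ)) ≠ 0 := by positivity
  field_simp [h1]
  rw [h1]; ring
end EUCL
section EUCL2
open Finset Polynomial

variable (d s : ℕ) (tt : Fin s → ℝ) (aa : Fin s → ℕ)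

lemma theta_eq_zero (d : ℕ) (h : Polynomial ℝ) (hdeg : h.natDegree ≤ d)
    (h0 : thetaL d h = 0) : h = 0 := by
  ext n
  rcases le_or_gt n d with hn | hn
  · have := congrArg (fun v : EuclideanSpace ℝ (Fin (d+1)) => v ⟨d - n, by omega⟩) h0
    rw [thetaL_apply] at this
    simp only [show d - (d - n) = n from by omega] at this
    have hfac : (((d-n).factorial : ℝ) * (n.factorial : ℝ)) ≠ 0 := by positivity
    simp only [PiLp.zero_apply] at this
    rcases mul_eq_zero.1 this with h1 | h1
    · exact absurd h1 hfac
    · simpa using h1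
  · exact Polynomial.coeff_eq_zero_of_natDegree_lt (by omega)

lemma PP_ne_zero : PP d s tt aa ≠ 0 := by
  unfold PP
  apply Finset.prod_ne_zero_iff.2
  intro i _
  exact pow_ne_zero _ (Polynomial.X_sub_C_ne_zero (tt i))

lemma natDegree_PP : (PP d s tt aa).natDegree = DD d s aa := by
  unfold PP DD
  rw [Polynomial.natDegree_prod _ _ (fun i _ => pow_ne_zero _ (Polynomial.X_sub_C_ne_zero (tt i)))]
  exact Finset.sum_congr rfl fun i _ => by
    rw [Polynomial.natDegree_pow, Polynomial.natDegree_X_sub_C, mul_one]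

lemma Wperp_eq (hinj : Function.Injective tt) :
    (Submodule.span ℝ (genSet d s tt aa))ᗮ = Dsub d s tt aa := by
  apply le_antisymm
  · -- hard direction: orthogonal implies in image
    intro g hg
    rw [mem_orthogonal_span_iff] at hg
    set h := invtheta d g with hh
    have hdeg : h.natDegree ≤ d := natDegree_invtheta d g
    have hcond : ∀ (i : Fin s) (j : ℕ), j + (aa i + 1) ≤ d →
        condF d (aa i + 1) (tt i) j h = 0 := by
      intro i j hj
      rw [← inner_vvec d (aa i + 1) j hj (tt i) h, theta_invtheta]
      exact hg _ ⟨i, j, hj, rfl⟩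
    have hdvd : PP d s tt aa ∣ h := by
      unfold PP
      apply Finset.prod_dvd_of_coprime
      · intro i _ k _ hik
        exact (IsCoprime.pow (Polynomial.pairwise_coprime_X_sub_C hinj hik))
      · intro i _
        rcases lt_or_ge (aa i) d with hai | hai
        · have := key_dvd d (aa i + 1) (tt i) (by omega) (by omega) h hdeg
            (fun j hj => hcond i j hj)
          rwa [show d - (aa i + 1) + 1 = d - aa i from by omega] at this
        · rw [show d - aa i = 0 from by omega, pow_zero]
          exact one_dvd _
    obtain ⟨u, hu⟩ := hdvd
    rcases eq_or_ne h 0 with h0 | h0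
    · have : g = 0 := by rw [← theta_invtheta d g, ← hh, h0, map_zero]
      rw [this]
      exact Submodule.zero_mem _
    · have hu0 : u ≠ 0 := fun h' => h0 (by rw [hu, h', mul_zero])
      have hDD : DD d s aa + u.natDegree ≤ d := by
        have := Polynomial.natDegree_mul (PP_ne_zero d s tt aa) hu0
        rw [← hu, natDegree_PP] at this
        omega
      refine Submodule.mem_map.2 ⟨u, ?_, ?_⟩
      · rw [Polynomial.mem_degreeLT]
        calc u.degree ≤ u.natDegree := Polynomial.degree_le_natDegree
          _ < ((d + 1 - DD d s aa : ℕ) : WithBot ℕ) := by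
            exact_mod_cast (show u.natDegree < d + 1 - DD d s aa by omega)
      · rw [LinearMap.comp_apply, LinearMap.mulLeft_apply, ← hu]
        exact theta_invtheta d g
  · -- easy direction
    intro g hg
    obtain ⟨u, hu, rfl⟩ := Submodule.mem_map.1 hg
    rw [mem_orthogonal_span_iff]
    rintro w ⟨i, j, hj, rfl⟩
    rw [LinearMap.comp_apply, LinearMap.mulLeft_apply]
    rw [inner_vvec d (aa i + 1) j hj (tt i)]
    rcases eq_or_ne u 0 with rfl | hu0
    · rw [mul_zero]
      unfold condF
      apply Finset.sum_eq_zero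
      intro r _
      simp
    · have hDDle : DD d s aa + u.natDegree ≤ d := by
        rw [Polynomial.mem_degreeLT] at hu
        have h1 : u.natDegree < d + 1 - DD d s aa := by
          have := Polynomial.degree_eq_natDegree hu0
          rw [this] at hu
          exact_mod_cast hu
        omega
      have hdeg : (PP d s tt aa * u).natDegree ≤ d := by
        rw [Polynomial.natDegree_mul (PP_ne_zero d s tt aa) hu0, natDegree_PP]
        omega
      apply key_zero d (aa i + 1) (tt i) (by omega) _ hdeg
      · -- divisibility
        rw [show d - (aa i + 1) + 1 = d - aa i from by omega]
        exact Dvd.dvd.mul_right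
          (dvd_trans (dvd_refl _) (Finset.dvd_prod_of_mem (fun i => (X - C (tt i))^(d - aa i))
            (Finset.mem_univ i))) u
      · exact hj

lemma finrank_Dsub : Module.finrank ℝ (Dsub d s tt aa) = d + 1 - DD d s aa := by
  unfold Dsub
  set F := (thetaL d).comp (LinearMap.mulLeft ℝ (PP d s tt aa)) with hF
  have hinj : ∀ u ∈ Polynomial.degreeLT ℝ (d + 1 - DD d s aa), F u = 0 → u = 0 := by
    intro u hu h0
    by_contra hu0
    have hdeg : (PP d s tt aa * u).natDegree ≤ d := by
      rw [Polynomial.natDegree_mul (PP_ne_zero d s tt aa) hu0, natDegree_PP]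
      rw [Polynomial.mem_degreeLT] at hu
      have h1 : u.natDegree < d + 1 - DD d s aa := by
        have := Polynomial.degree_eq_natDegree hu0
        rw [this] at hu
        exact_mod_cast hu
      omega
    have := theta_eq_zero d _ hdeg h0
    exact hu0 (by
      rcases mul_eq_zero.1 this with h1 | h1
      · exact absurd h1 (PP_ne_zero d s tt aa)
      · exact h1)
  -- finrank of map equals finrank of domain submodule
  set K := Polynomial.degreeLT ℝ (d + 1 - DD d s aa) with hK
  have hmap : Submodule.map F K = LinearMap.range (F.comp K.subtype) := by
    rw [LinearMap.range_comp, Submodule.range_subtype]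
  have hinj2 : Function.Injective (F.comp K.subtype) := by
    rw [← LinearMap.ker_eq_bot]
    apply (Submodule.eq_bot_iff _).2
    intro x hx
    rw [LinearMap.mem_ker, LinearMap.comp_apply] at hx
    exact Subtype.ext (hinj x.1 x.2 hx)
  rw [hmap, LinearMap.finrank_range_of_inj hinj2]
  rw [(Polynomial.degreeLTEquiv ℝ (d + 1 - DD d s aa)).finrank_eq]
  exact Module.finrank_fin_fun ℝ

end EUCL2
section EUCL3
open Finset Polynomial

lemma finrank_Wspan (d s : ℕ) (tt : Fin s → ℝ) (aa : Fin s → ℕ)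
    (hinj : Function.Injective tt) :
    Module.finrank ℝ (Submodule.span ℝ (genSet d s tt aa)) = min (d + 1) (DD d s aa) := by
  have horth := Submodule.finrank_add_finrank_orthogonal
    (K := Submodule.span ℝ (genSet d s tt aa))
  rw [Wperp_eq d s tt aa hinj, finrank_Dsub d s tt aa, finrank_euclideanSpace_fin] at horth
  omega

end EUCL3
section MV
open Finset MvPolynomial

variable (d s : ℕ) (b c : Fin s → ℝ) (a : Fin s → ℕ)

noncomputable def ell (i : Fin s) : MvPolynomial (Fin 2) ℝ := C (b i) * X 0 + C (c i) * X 1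

def Sgen : Set (MvPolynomial (Fin 2) ℝ) :=
  {f | ∃ i, f = (C (b i) * X 0 + C (c i) * X 1) ^ (a i + 1)}

def Tset (d' : ℕ) : Set (MvPolynomial (Fin 2) ℝ) :=
  {f | ∃ (i : Fin s) (j k : ℕ), j + k + (a i + 1) = d' ∧
    f = (ell s b c i)^(a i + 1) * monomial (Finsupp.single 0 j + Finsupp.single 1 k) 1}

def MULset : Set (MvPolynomial (Fin 2) ℝ) :=
  {f | ∃ (i : Fin s) (ν : Fin 2 →₀ ℕ), f = (ell s b c i)^(a i + 1) * monomial ν 1}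

lemma fin2_decomp (ν : Fin 2 →₀ ℕ) :
    ν = Finsupp.single 0 (ν 0) + Finsupp.single 1 (ν 1) := by
  ext x
  fin_cases x <;> simp [Finsupp.single_apply]

lemma fin2_degree (ν : Fin 2 →₀ ℕ) : ν.degree = ν 0 + ν 1 := by
  rw [Finsupp.degree_apply,
    Finset.sum_subset (Finset.subset_univ ν.support)
      (fun x _ hx => Finsupp.notMem_support_iff.1 hx), Fin.sum_univ_two]

lemma single2_eval0 (x y : ℕ) :
    ((Finsupp.single (0 : Fin 2) x + Finsupp.single 1 y : Fin 2 →₀ ℕ)) 0 = x := by simp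
lemma single2_eval1 (x y : ℕ) :
    ((Finsupp.single (0 : Fin 2) x + Finsupp.single 1 y : Fin 2 →₀ ℕ)) 1 = y := by
  simp [Finsupp.single_apply]

lemma single2_degree (x y : ℕ) :
    (Finsupp.single (0 : Fin 2) x + Finsupp.single 1 y).degree = x + y := by
  rw [fin2_degree, single2_eval0, single2_eval1]

lemma single2_inj {x y x' y' : ℕ}
    (h : Finsupp.single (0 : Fin 2) x + Finsupp.single 1 y
       = Finsupp.single (0 : Fin 2) x' + Finsupp.single 1 y') : x = x' ∧ y = y' := by
  constructor
  · have := DFunLike.congr_fun h 0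
    simpa [Finsupp.single_apply] using this
  · have := DFunLike.congr_fun h 1
    simpa [Finsupp.single_apply] using this

lemma ell_hom (i : Fin s) : (ell s b c i).IsHomogeneous 1 :=
  (isHomogeneous_C_mul_X _ _).add (isHomogeneous_C_mul_X _ _)

lemma ellpow_hom (i : Fin s) (n : ℕ) : ((ell s b c i)^n).IsHomogeneous n := by
  simpa using (ell_hom s b c i).pow n

lemma ell_ne_zero (i : Fin s) (hb : b i ≠ 0) : ell s b c i ≠ 0 := by
  intro h
  have : coeff (Finsupp.single (0 : Fin 2) 1) (ell s b c i) = b i := by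
    unfold ell
    rw [coeff_add, coeff_C_mul, coeff_C_mul, coeff_X, coeff_X']
    rw [if_neg (show ¬ (Finsupp.single (1 : Fin 2) 1 = Finsupp.single 0 1) by simp [Finsupp.single_eq_single_iff])]
    simp
  rw [h] at this
  simp at this
  exact hb this.symm

lemma mul_mem_span_MUL (r x : MvPolynomial (Fin 2) ℝ)
    (hx : x ∈ Submodule.span ℝ (MULset s b c a)) :
    r * x ∈ Submodule.span ℝ (MULset s b c a) := by
  have mono_mul : ∀ (ν : Fin 2 →₀ ℕ) (cc : ℝ) (y : MvPolynomial (Fin 2) ℝ),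
      y ∈ Submodule.span ℝ (MULset s b c a) →
      monomial ν cc * y ∈ Submodule.span ℝ (MULset s b c a) := by
    intro ν cc y hy
    induction hy using Submodule.span_induction with
    | mem z hz =>
      obtain ⟨i, μ, rfl⟩ := hz
      have key : monomial ν cc * ((ell s b c i)^(a i + 1) * monomial μ 1)
          = cc • ((ell s b c i)^(a i + 1) * monomial (ν + μ) 1) := by
        rw [smul_eq_C_mul, show (monomial (ν + μ) (1:ℝ)) = monomial ν (1:ℝ) * monomial μ 1 from
          by rw [monomial_mul, one_mul],
          show (monomial ν (cc:ℝ)) = C cc * monomial ν (1:ℝ) from by rw [C_mul_monomial, mul_one]]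
        ring
      rw [key]
      exact Submodule.smul_mem _ _ (Submodule.subset_span ⟨i, ν + μ, rfl⟩)
    | zero => rw [mul_zero]; exact Submodule.zero_mem _
    | add u v _ _ hu hv => rw [mul_add]; exact Submodule.add_mem _ hu hv
    | smul t u _ hu => rw [mul_smul_comm]; exact Submodule.smul_mem _ _ hu
  have hrx : r * x = ∑ ν ∈ r.support, monomial ν (coeff ν r) * x := by
    rw [← Finset.sum_mul, support_sum_monomial_coeff]
  rw [hrx]
  exact Submodule.sum_mem _ (fun ν _ => mono_mul ν (coeff ν r) x hx)

lemma ideal_eq :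
    (Ideal.span (Sgen s b c a)).restrictScalars ℝ = Submodule.span ℝ (MULset s b c a) := by
  apply le_antisymm
  · intro f hf
    rw [Submodule.restrictScalars_mem] at hf
    induction hf using Submodule.span_induction with
    | mem x hx =>
      obtain ⟨i, rfl⟩ := hx
      refine Submodule.subset_span ⟨i, 0, ?_⟩
      unfold ell
      simp
    | zero => exact Submodule.zero_mem _
    | add u v _ _ hu hv => exact Submodule.add_mem _ hu hv
    | smul t u _ hu => rw [smul_eq_mul]; exact mul_mem_span_MUL s b c a t u hu
  · rw [Submodule.span_le]
    rintro f ⟨i, ν, rfl⟩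
    rw [SetLike.mem_coe, Submodule.restrictScalars_mem]
    exact Ideal.mul_mem_right _ _ (Ideal.subset_span ⟨i, rfl⟩)

lemma span_inf_homog (S : Set (MvPolynomial (Fin 2) ℝ))
    (hS : ∀ f ∈ S, ∃ n, f.IsHomogeneous n) (d : ℕ) :
    Submodule.span ℝ S ⊓ homogeneousSubmodule (Fin 2) ℝ d
      = Submodule.span ℝ {f | f ∈ S ∧ f.IsHomogeneous d} := by
  apply le_antisymm
  · intro f hf
    rw [Submodule.mem_inf] at hf
    obtain ⟨hf1, hf2⟩ := hf
    obtain ⟨co, hsupp, rfl⟩ := Submodule.mem_span_set.1 hf1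
    have hexp : homogeneousComponent d (co.sum fun mi r => r • mi)
        = co.sum fun mi r => r • homogeneousComponent d mi := by
      rw [map_finsuppSum]
      exact Finsupp.sum_congr fun mi _ => map_smul _ _ _
    have hfix := homogeneousComponent_of_mem (m := d) (n := d) hf2
    rw [if_pos rfl] at hfix
    rw [← hfix, hexp]
    apply Submodule.finsuppSum_mem
    intro mi hmi
    obtain ⟨n, hn⟩ := hS mi (hsupp (Finsupp.mem_support_iff.2 hmi))
    have hsupp' : mi ∈ S := hsupp (Finsupp.mem_support_iff.2 hmi)
    rw [homogeneousComponent_of_mem ((mem_homogeneousSubmodule n mi).mpr hn)]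
    by_cases hdn : d = n
    · rw [if_pos hdn]
      exact Submodule.smul_mem _ _ (Submodule.subset_span ⟨hsupp', hdn ▸ hn⟩)
    · rw [if_neg hdn, smul_zero]
      exact Submodule.zero_mem _
  · rw [Submodule.span_le]
    rintro f ⟨hfS, hfhom⟩
    rw [SetLike.mem_coe, Submodule.mem_inf]
    exact ⟨Submodule.subset_span hfS, hfhom⟩

lemma MUL_homog (i : Fin s) (ν : Fin 2 →₀ ℕ) :
    ((ell s b c i)^(a i + 1) * monomial ν 1).IsHomogeneous ((a i + 1) + ν.degree) :=
  (ellpow_hom s b c i _).mul (isHomogeneous_monomial _ rfl)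

lemma Tspan_eq (hb : ∀ i, b i ≠ 0) :
    Submodule.span ℝ {f | f ∈ MULset s b c a ∧ f.IsHomogeneous d}
      = Submodule.span ℝ (Tset s b c a d) := by
  apply le_antisymm <;> rw [Submodule.span_le]
  · rintro f ⟨⟨i, ν, rfl⟩, hhom⟩
    have hn := MUL_homog s b c a i ν
    have hne : (ell s b c i)^(a i + 1) * monomial ν 1 ≠ 0 := by
      apply mul_ne_zero (pow_ne_zero _ (ell_ne_zero s b c i (hb i)))
      rw [Ne, MvPolynomial.monomial_eq_zero]
      exact one_ne_zero
    have hdeq : (a i + 1) + ν.degree = d := MvPolynomial.IsHomogeneous.inj_right hn hhom hne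
    apply Submodule.subset_span
    refine ⟨i, ν 0, ν 1, by rw [fin2_degree] at hdeq; omega, ?_⟩
    rw [← fin2_decomp]
  · rintro f ⟨i, j, k, hjk, rfl⟩
    refine Submodule.subset_span ⟨⟨i, _, rfl⟩, ?_⟩
    have := MUL_homog s b c a i (Finsupp.single 0 j + Finsupp.single 1 k)
    rwa [single2_degree, show (a i + 1) + (j + k) = d from by omega] at this

lemma M_eq (hb : ∀ i, b i ≠ 0) :
    (Ideal.span (Sgen s b c a)).restrictScalars ℝ ⊓ homogeneousSubmodule (Fin 2) ℝ d
      = Submodule.span ℝ (Tset s b c a d) := by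
  rw [ideal_eq, span_inf_homog _ (fun f hf => by
    obtain ⟨i, ν, rfl⟩ := hf
    exact ⟨_, MUL_homog s b c a i ν⟩), Tspan_eq d s b c a hb]

end MV
section MV2
open Finset MvPolynomial

lemma finrank_map_eq_of_injOn {A B : Type*} [AddCommGroup A] [Module ℝ A]
    [AddCommGroup B] [Module ℝ B] (K : Submodule ℝ A) (φ : A →ₗ[ℝ] B)
    (h : ∀ x ∈ K, φ x = 0 → x = 0) :
    Module.finrank ℝ (K.map φ) = Module.finrank ℝ K := by
  have hmap : K.map φ = LinearMap.range (φ.comp K.subtype) := by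
    rw [LinearMap.range_comp, Submodule.range_subtype]
  have hinj2 : Function.Injective (φ.comp K.subtype) := by
    rw [← LinearMap.ker_eq_bot]
    apply (Submodule.eq_bot_iff _).2
    intro x hx
    rw [LinearMap.mem_ker, LinearMap.comp_apply] at hx
    exact Subtype.ext (h x.1 x.2 hx)
  rw [hmap, LinearMap.finrank_range_of_inj hinj2]

noncomputable def phi (d : ℕ) : MvPolynomial (Fin 2) ℝ →ₗ[ℝ] EuclideanSpace ℝ (Fin (d+1)) where
  toFun f := WithLp.toLp 2 fun p => coeff (Finsupp.single 0 (p:ℕ) + Finsupp.single 1 (d-(p:ℕ))) f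
  map_add' f g := by ext p; simp only [coeff_add, PiLp.add_apply, PiLp.toLp_apply]
  map_smul' r f := by ext p; simp only [coeff_smul, PiLp.smul_apply, PiLp.toLp_apply, smul_eq_mul,
    RingHom.id_apply]

lemma phi_apply (d : ℕ) (f : MvPolynomial (Fin 2) ℝ) (p : Fin (d+1)) :
    phi d f p = coeff (Finsupp.single 0 (p:ℕ) + Finsupp.single 1 (d-(p:ℕ))) f := rfl

lemma phi_inj_on_homog (d : ℕ) (f : MvPolynomial (Fin 2) ℝ) (hf : f.IsHomogeneous d)
    (h0 : phi d f = 0) : f = 0 := by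
  rw [MvPolynomial.eq_zero_iff]
  intro μ
  rcases eq_or_ne μ.degree d with hdeg | hdeg
  · have hd0 : μ 0 + μ 1 = d := by rw [fin2_degree] at hdeg; omega
    have := congrArg (fun v : EuclideanSpace ℝ (Fin (d+1)) => v ⟨μ 0, by omega⟩) h0
    rw [phi_apply] at this
    simp only [PiLp.zero_apply] at this
    rwa [show d - μ 0 = μ 1 from by omega, ← fin2_decomp] at this
  · exact hf.coeff_eq_zero hdeg

lemma ell_pow_expand (bb cc : ℝ) (m : ℕ) :
    (C bb * X 0 + C cc * X 1 : MvPolynomial (Fin 2) ℝ)^m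
    = ∑ r ∈ range (m+1), monomial (Finsupp.single 0 r + Finsupp.single 1 (m-r))
        ((m.choose r : ℝ) * bb^r * cc^(m-r)) := by
  rw [add_pow]
  refine Finset.sum_congr rfl fun r hr => ?_
  rw [mul_pow, mul_pow, ← C_pow, ← C_pow, X_pow_eq_monomial, X_pow_eq_monomial,
    C_mul_monomial, C_mul_monomial, monomial_mul]
  rw [show ((m.choose r : ℕ) : MvPolynomial (Fin 2) ℝ) = C ((m.choose r : ℕ) : ℝ) from by
    simp]
  rw [mul_comm _ (C ((m.choose r : ℕ) : ℝ)), C_mul_monomial]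
  congr 1
  ring

end MV2
section MV3
open Finset MvPolynomial

variable (d s : ℕ) (b c : Fin s → ℝ) (a : Fin s → ℕ)

lemma gen_expand (i : Fin s) (j k : ℕ) :
    (ell s b c i)^(a i + 1) * monomial (Finsupp.single 0 j + Finsupp.single 1 k) 1
    = ∑ r ∈ range ((a i + 1)+1), monomial
        (Finsupp.single 0 (r+j) + Finsupp.single 1 (((a i + 1)-r)+k))
        (((a i + 1).choose r : ℝ) * (b i)^r * (c i)^((a i + 1)-r)) := by
  unfold ell
  rw [ell_pow_expand, Finset.sum_mul]
  refine Finset.sum_congr rfl fun r hr => ?_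
  rw [monomial_mul, mul_one]
  congr 1
  rw [Finsupp.single_add, Finsupp.single_add]
  abel

lemma phi_gen (hb : ∀ i, b i ≠ 0) (i : Fin s) (j k : ℕ) (hjk : j + k + (a i + 1) = d) :
    phi d ((ell s b c i)^(a i + 1) * monomial (Finsupp.single 0 j + Finsupp.single 1 k) 1)
    = (b i)^(a i + 1) • vvec d (a i + 1) j (c i / b i) := by
  set m := a i + 1 with hm
  ext p
  rw [phi_apply, gen_expand, coeff_sum]
  simp_rw [coeff_monomial]
  have hrhs : ((b i)^m • vvec d m j (c i / b i)) p
      = (b i)^m * (if j ≤ (p:ℕ) then (m.choose ((p:ℕ)-j) : ℝ) * (c i / b i)^(m-((p:ℕ)-j)) else 0) := by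
    rw [PiLp.smul_apply, smul_eq_mul]
    rfl
  rw [hrhs]
  have hp : (p:ℕ) ≤ d := by omega
  by_cases hcase : j ≤ (p:ℕ) ∧ (p:ℕ) - j ≤ m
  · obtain ⟨h1, h2⟩ := hcase
    rw [Finset.sum_eq_single_of_mem ((p:ℕ)-j) (by rw [mem_range]; omega)]
    · rw [if_pos]
      · rw [if_pos h1,
          show (b i)^m = (b i)^((p:ℕ)-j) * (b i)^(m-((p:ℕ)-j)) from by
            rw [← pow_add]; congr 1; omega]
        have key : (b i)^(m-((p:ℕ)-j)) * (c i / b i)^(m-((p:ℕ)-j))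
            = (c i)^(m-((p:ℕ)-j)) := by
          rw [← mul_pow, mul_comm (b i) _, div_mul_cancel₀ _ (hb i)]
        linear_combination (-((m.choose ((p:ℕ)-j) : ℝ) * (b i)^((p:ℕ)-j))) * key
      · congr 1
        · congr 1
          omega
        · congr 1
          omega
    · intro r hr hne
      rw [mem_range] at hr
      rw [if_neg]
      intro hEq
      exact hne (by have := (single2_inj hEq).1; omega)
  · rw [Finset.sum_eq_zero]
    · rcases le_or_gt j (p:ℕ) with h1 | h1
      · have h2 : m < (p:ℕ) - j := by omega
        rw [if_pos h1, Nat.choose_eq_zero_of_lt h2]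
        simp
      · rw [if_neg (by omega)]
        simp
    · intro r hr
      rw [mem_range] at hr
      rw [if_neg]
      intro hEq
      have := (single2_inj hEq).1
      omega

lemma span_image_eq (hb : ∀ i, b i ≠ 0) :
    Submodule.span ℝ (phi d '' Tset s b c a d)
    = Submodule.span ℝ (genSet d s (fun i => c i / b i) a) := by
  apply le_antisymm <;> rw [Submodule.span_le] <;> intro w hw
  · obtain ⟨f, ⟨i, j, k, hjk, rfl⟩, rfl⟩ := hw
    rw [phi_gen d s b c a hb i j k hjk]
    exact Submodule.smul_mem _ _
      (Submodule.subset_span ⟨i, j, by omega, rfl⟩)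
  · obtain ⟨i, j, hj, rfl⟩ := hw
    have hjk : j + (d - (a i + 1) - j) + (a i + 1) = d := by omega
    have hv : vvec d (a i + 1) j (c i / b i)
        = ((b i)^(a i + 1))⁻¹ • phi d ((ell s b c i)^(a i + 1) *
            monomial (Finsupp.single 0 j + Finsupp.single 1 (d - (a i + 1) - j)) 1) := by
      rw [phi_gen d s b c a hb i j _ hjk, inv_smul_smul₀ (pow_ne_zero _ (hb i))]
    rw [hv]
    exact Submodule.smul_mem _ _
      (Submodule.subset_span ⟨_, ⟨i, j, _, hjk, rfl⟩, rfl⟩)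

end MV3

open MvPolynomial

/-- Geramita–Schenck: Hilbert function of a power ideal of `s` distinct points of `ℙ¹`
(with nonvanishing `x`-coordinates) with multiplicities `a₁ ≤ … ≤ a_s`:
`dim J_d = min(d+1, Σᵢ max(d - aᵢ, 0))`. -/
theorem power_ideal_hilbert_function (s : ℕ) (b c : Fin s → ℝ)
    (hb : ∀ i, b i ≠ 0)
    (hdist : ∀ i j, i ≠ j → b i * c j ≠ b j * c i)
    (a : Fin s → ℕ) (hmono : Monotone a) (d : ℕ) :
    Module.finrank ℝ
      ↥((Ideal.span {f : MvPolynomial (Fin 2) ℝ |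
            ∃ i, f = (C (b i) * X 0 + C (c i) * X 1) ^ (a i + 1)}).restrictScalars ℝ ⊓
          homogeneousSubmodule (Fin 2) ℝ d) =
      min (d + 1) (∑ i, (d - a i)) := by
  classical
  have hinjT : Function.Injective (fun i => c i / b i) := by
    intro i k h
    by_contra hne
    apply hdist i k hne
    have h' : c i * b k = c k * b i := (div_eq_div_iff (hb i) (hb k)).1 h
    linarith [h']
  have hset : {f : MvPolynomial (Fin 2) ℝ |
      ∃ i, f = (C (b i) * X 0 + C (c i) * X 1) ^ (a i + 1)} = Sgen s b c a := rfl
  rw [hset, M_eq d s b c a hb]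
  have hhomog : ∀ x ∈ Submodule.span ℝ (Tset s b c a d), x.IsHomogeneous d := by
    intro x hx
    have : Submodule.span ℝ (Tset s b c a d) ≤ homogeneousSubmodule (Fin 2) ℝ d := by
      rw [← M_eq d s b c a hb]
      exact inf_le_right
    exact this hx
  rw [← finrank_map_eq_of_injOn (Submodule.span ℝ (Tset s b c a d)) (phi d)
    (fun x hx h0 => phi_inj_on_homog d x (hhomog x hx) h0)]
  rw [Submodule.map_span, span_image_eq d s b c a hb,
    finrank_Wspan d s (fun i => c i / b i) a hinjT]
  rfl
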